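/- Let 𝒫 be the set of 15 two-qubit Pauli strings (Kronecker products P ⊗ Q with P, Q ∈ {1, X, Y, Z}, excluding 1 ⊗ 1), and call a 3-element subset {P, Q, R} ⊆ 𝒫 with pairwise commuting elements and P * Q * R = ε • 1, ε ∈ {1, −1}, a Pauli line with sign ε. Say an assignment ν : 𝒫 → ({1, −1} : Set ℤ) violates a line {P, Q, R} of sign ε if ν(P) * ν(Q) * ν(R) ≠ ε. Then every assignment ν violates at least 3 of the 15 Pauli lines; moreover the constant assignment ν ≡ 1 violates exactly 3 of them (namely {X⊗X, Y⊗Y, Z⊗Z}, {X⊗Y, Y⊗Z, Z⊗X}, {X⊗Z, Y⊗X, Z⊗Y}). -/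

import Mathlib

open Kronecker

namespace Stmt14

/-- The Pauli matrix `X`. -/
noncomputable def σx : Matrix (Fin 2) (Fin 2) ℂ := !![0, 1; 1, 0]

/-- The Pauli matrix `Y`. -/
noncomputable def σy : Matrix (Fin 2) (Fin 2) ℂ := !![0, -Complex.I; Complex.I, 0]

/-- The Pauli matrix `Z`. -/
noncomputable def σz : Matrix (Fin 2) (Fin 2) ℂ := !![1, 0; 0, -1]

/-- The set `{1, X, Y, Z}` of one-qubit Pauli matrices. -/
noncomputable def pauli1 : Set (Matrix (Fin 2) (Fin 2) ℂ) := {1, σx, σy, σz}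

/-- The set `𝒫` of the 15 two-qubit Pauli strings: Kronecker products `P ⊗ Q` with
`P, Q ∈ {1, X, Y, Z}`, excluding `1 ⊗ 1`. -/
noncomputable def pauliStrings : Set (Matrix (Fin 2 × Fin 2) (Fin 2 × Fin 2) ℂ) :=
  {A | (∃ P ∈ pauli1, ∃ Q ∈ pauli1, A = P ⊗ₖ Q) ∧
    A ≠ (1 : Matrix (Fin 2) (Fin 2) ℂ) ⊗ₖ (1 : Matrix (Fin 2) (Fin 2) ℂ)}

/-- A Pauli line: a 3-element subset `{P, Q, R}` of `𝒫` whose elements pairwise commute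
and with `P * Q * R = ε • 1` for some sign `ε ∈ {1, −1}`. -/
def IsPauliLine (L : Set (Matrix (Fin 2 × Fin 2) (Fin 2 × Fin 2) ℂ)) : Prop :=
  ∃ P Q R : Matrix (Fin 2 × Fin 2) (Fin 2 × Fin 2) ℂ,
    P ∈ pauliStrings ∧ Q ∈ pauliStrings ∧ R ∈ pauliStrings ∧
    P ≠ Q ∧ P ≠ R ∧ Q ≠ R ∧ L = {P, Q, R} ∧
    P * Q = Q * P ∧ P * R = R * P ∧ Q * R = R * Q ∧
    ∃ ε : ℂ, (ε = 1 ∨ ε = -1) ∧ P * Q * R = ε • (1 : Matrix (Fin 2 × Fin 2) (Fin 2 × Fin 2) ℂ)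

/-- An assignment `ν` of `±1` outcomes violates the line `{P, Q, R}` of sign `ε` if
`ν P * ν Q * ν R ≠ ε`. -/
def Violates (ν : Matrix (Fin 2 × Fin 2) (Fin 2 × Fin 2) ℂ → ℤ)
    (L : Set (Matrix (Fin 2 × Fin 2) (Fin 2 × Fin 2) ℂ)) : Prop :=
  ∃ P Q R : Matrix (Fin 2 × Fin 2) (Fin 2 × Fin 2) ℂ, ∃ ε : ℤ,
    L = {P, Q, R} ∧ P ≠ Q ∧ P ≠ R ∧ Q ≠ R ∧
    P * Q * R = (ε : ℂ) • (1 : Matrix (Fin 2 × Fin 2) (Fin 2 × Fin 2) ℂ) ∧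
    ν P * ν Q * ν R ≠ ε

noncomputable def M : Fin 4 → Matrix (Fin 2) (Fin 2) ℂ := ![1, σx, σy, σz]

def ee : Fin 4 → Fin 4 → ℕ := ![![0,0,0,0], ![0,0,1,3], ![0,3,0,1], ![0,1,3,0]]

def x4 : Fin 4 → Fin 4 → Fin 4 := ![![0,1,2,3], ![1,0,3,2], ![2,3,0,1], ![3,2,1,0]]

lemma mulM : ∀ a b, M a * M b = (Complex.I ^ ee a b) • M (x4 a b) := by
  intro a b
  fin_cases a <;> fin_cases b <;>
    simp [M, ee, x4, σx, σy, σz, Matrix.one_fin_two, Matrix.mul_fin_two,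
      Matrix.smul_of, Matrix.smul_cons, Matrix.smul_empty, pow_succ, Complex.I_sq,
      Matrix.vecHead, Matrix.vecTail] <;>
    norm_num [Complex.ext_iff]


abbrev Idx := Fin 4 × Fin 4

def xx (u v : Idx) : Idx := (x4 u.1 v.1, x4 u.2 v.2)
def E (u v : Idx) : ℕ := ee u.1 v.1 + ee u.2 v.2

noncomputable def Pmat (u : Idx) : Matrix (Fin 2 × Fin 2) (Fin 2 × Fin 2) ℂ := M u.1 ⊗ₖ M u.2

lemma mulP (u v : Idx) : Pmat u * Pmat v = (Complex.I ^ E u v) • Pmat (xx u v) := by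
  rw [Pmat, Pmat, Pmat, ← Matrix.mul_kronecker_mul, mulM, mulM, Matrix.smul_kronecker,
    Matrix.kronecker_smul, smul_smul, ← pow_add, E, xx]

lemma Pmat_zero : Pmat (0, 0) = 1 := by
  rw [Pmat, show M 0 = 1 from rfl, Matrix.one_kronecker_one]

lemma xx_self (u : Idx) : xx u u = (0, 0) := by
  obtain ⟨a, b⟩ := u; fin_cases a <;> fin_cases b <;> rfl

lemma E_self (u : Idx) : E u u = 0 := by
  obtain ⟨a, b⟩ := u; fin_cases a <;> fin_cases b <;> rfl

lemma sqP (u : Idx) : Pmat u * Pmat u = 1 := by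
  rw [mulP, E_self, xx_self, Pmat_zero, pow_zero, one_smul]

lemma traceM : ∀ a, (M a).trace = if a = 0 then 2 else 0 := by
  intro a
  fin_cases a <;> simp [M, σx, σy, σz, Matrix.trace_fin_two, Matrix.one_fin_two] <;> norm_num

lemma traceP (u : Idx) : (Pmat u).trace = if u = (0, 0) then 4 else 0 := by
  obtain ⟨a, b⟩ := u
  rw [Pmat, Matrix.trace_kronecker, traceM, traceM]
  by_cases ha : a = 0 <;> by_cases hb : b = 0 <;> simp [ha, hb, Prod.ext_iff] <;> norm_num

lemma xx_eq_zero_iff (u v : Idx) : xx u v = (0, 0) ↔ u = v := by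
  obtain ⟨a, b⟩ := u; obtain ⟨c, d⟩ := v
  fin_cases a <;> fin_cases b <;> fin_cases c <;> fin_cases d <;> simp_all <;> decide

lemma Pmat_inj : Function.Injective Pmat := by
  intro u v h
  by_contra hne
  have h1 : Pmat u * Pmat v = 1 := by rw [h, sqP]
  rw [mulP] at h1
  have := congrArg Matrix.trace h1
  rw [Matrix.trace_smul, traceP, Matrix.trace_one, if_neg (fun hc => hne ((xx_eq_zero_iff u v).mp hc))] at this
  simp at this

lemma Ipow_mod (n : ℕ) : Complex.I ^ n = Complex.I ^ (n % 4) := by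
  conv_lhs => rw [← Nat.div_add_mod n 4]
  rw [pow_add, pow_mul, Complex.I_pow_four, one_pow, one_mul]

lemma Ipow_eq_neg_one_iff (n : ℕ) : Complex.I ^ n = -1 ↔ n % 4 = 2 := by
  rw [Ipow_mod]
  have h : n % 4 < 4 := Nat.mod_lt _ (by norm_num)
  interval_cases (n % 4) <;> norm_num [pow_succ, Complex.ext_iff]

lemma commP (u v : Idx) (h : E u v % 4 = E v u % 4) : Pmat u * Pmat v = Pmat v * Pmat u := by
  have hxx : xx u v = xx v u := by
    obtain ⟨a, b⟩ := u; obtain ⟨c, d⟩ := v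
    simp only [xx, Prod.ext_iff]
    constructor <;> [fin_cases a <;> fin_cases c; fin_cases b <;> fin_cases d] <;> rfl
  rw [mulP, mulP, hxx, Ipow_mod, h, ← Ipow_mod]

lemma tripleP (u v : Idx) : Pmat u * Pmat v * Pmat (xx u v) = (Complex.I ^ E u v) • 1 := by
  rw [mulP, Matrix.smul_mul, sqP]

lemma one_kron_one : (1 : Matrix (Fin 2) (Fin 2) ℂ) ⊗ₖ (1 : Matrix (Fin 2) (Fin 2) ℂ) = Pmat (0,0) := by
  rw [Matrix.one_kronecker_one]; exact Pmat_zero.symm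

lemma mem_pauliStrings (A : Matrix (Fin 2 × Fin 2) (Fin 2 × Fin 2) ℂ) :
    A ∈ pauliStrings ↔ ∃ u : Idx, u ≠ (0, 0) ∧ A = Pmat u := by
  constructor
  · rintro ⟨⟨P, hP, Q, hQ, rfl⟩, hne⟩
    have hP' : ∃ a, P = M a := by
      rcases hP with h | h | h | h
      exacts [⟨0, h⟩, ⟨1, h⟩, ⟨2, h⟩, ⟨3, h⟩]
    have hQ' : ∃ b, Q = M b := by
      rcases hQ with h | h | h | h
      exacts [⟨0, h⟩, ⟨1, h⟩, ⟨2, h⟩, ⟨3, h⟩]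
    obtain ⟨a, rfl⟩ := hP'; obtain ⟨b, rfl⟩ := hQ'
    refine ⟨(a, b), ?_, rfl⟩
    refine fun hu => hne ?_
    rw [one_kron_one]
    exact congrArg Pmat hu
  · rintro ⟨⟨a, b⟩, hne, rfl⟩
    have hm : ∀ c, M c ∈ pauli1 := by
      intro c; fin_cases c
      · exact Or.inl rfl
      · exact Or.inr (Or.inl rfl)
      · exact Or.inr (Or.inr (Or.inl rfl))
      · exact Or.inr (Or.inr (Or.inr rfl))
    exact ⟨⟨M a, hm a, M b, hm b, rfl⟩, by rw [one_kron_one]; exact fun h => hne (Pmat_inj h)⟩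

lemma smul_one_inj {c d : ℂ}
    (h : c • (1 : Matrix (Fin 2 × Fin 2) (Fin 2 × Fin 2) ℂ) = d • 1) : c = d := by
  have := congrFun (congrFun h ((0,0) : Fin 2 × Fin 2)) ((0,0) : Fin 2 × Fin 2)
  simpa [Matrix.smul_apply, Matrix.one_apply] using this

def xor3 (a b c : Bool) : Bool := a.xor (b.xor c)

def lines : List (ℕ × ℕ × ℕ × Bool) :=
  [(0, 3, 4, false), (0, 7, 8, false), (0, 11, 12, false), (1, 3, 5, false),
   (1, 7, 9, false), (1, 11, 13, false), (2, 3, 6, false), (2, 7, 10, false),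
   (2, 11, 14, false), (4, 9, 14, true), (4, 10, 13, false), (5, 8, 14, false),
   (5, 10, 12, true), (6, 8, 13, true), (6, 9, 12, false)]

def violB (b : ℕ → Bool) (ℓ : ℕ × ℕ × ℕ × Bool) : Bool :=
  (xor3 (b ℓ.1) (b ℓ.2.1) (b ℓ.2.2.1)) != ℓ.2.2.2

def cnt (b : ℕ → Bool) : ℕ := lines.countP (violB b)

def check (n : ℕ) : Bool := Nat.ble 3 (cnt n.testBit)

def check' (n : ℕ) : Bool := n.testBit 10 || check n

def chk (lo : ℕ) : ℕ → Bool
  | 0 => check' lo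
  | d+1 => chk lo d && chk (lo + 2^d) d

set_option maxHeartbeats 10000000 in
lemma chk_all : chk 0 12 = true := by decide

lemma chk_spec : ∀ d lo, chk lo d = true → ∀ i, i < 2^d → check' (lo + i) = true := by
  intro d
  induction d with
  | zero =>
    intro lo h i hi
    interval_cases i
    simpa [chk] using h
  | succ d ih =>
    intro lo h i hi
    rw [chk, Bool.and_eq_true] at h
    rcases lt_or_ge i (2^d) with h1 | h1
    · exact ih lo h.1 i h1
    · have hi' : lo + i = (lo + 2^d) + (i - 2^d) := by omega
      rw [hi']
      exact ih _ h.2 _ (by rw [pow_succ] at hi; omega)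

lemma xor3_xor : ∀ x y z a b c : Bool,
    xor3 (x.xor a) (y.xor b) (z.xor c) = (xor3 x y z).xor (xor3 a b c) := by decide

lemma check_xor (n m : ℕ)
    (h : ∀ ℓ ∈ lines, xor3 (m.testBit ℓ.1) (m.testBit ℓ.2.1) (m.testBit ℓ.2.2.1) = false) :
    check (n ^^^ m) = check n := by
  have h2 : ∀ ℓ ∈ lines, violB (n ^^^ m).testBit ℓ = violB n.testBit ℓ := by
    intro ℓ hl
    simp only [violB, Nat.testBit_xor, xor3_xor, h ℓ hl, Bool.xor_false]
  rw [check, check, cnt, cnt, List.countP_congr (fun a ha => by rw [h2 a ha])]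

def nstep (m c n : ℕ) : ℕ := if n.testBit c then n ^^^ m else n

lemma nstep_bit (m c : ℕ) (hc : m.testBit c = true) (n : ℕ) :
    (nstep m c n).testBit c = false := by
  rw [nstep]; by_cases h : n.testBit c <;> simp [h, Nat.testBit_xor, hc]

lemma nstep_keep (m c j : ℕ) (hj : m.testBit j = false) (n : ℕ) :
    (nstep m c n).testBit j = n.testBit j := by
  rw [nstep]; by_cases h : n.testBit c <;> simp [h, Nat.testBit_xor, hj]

lemma nstep_lt (m c : ℕ) (hm : m < 32768) {n : ℕ} (hn : n < 32768) : nstep m c n < 32768 := by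
  rw [nstep]
  by_cases h : n.testBit c <;> simp only [h, if_true, if_false]
  · have : (32768 : ℕ) = 2 ^ 15 := by norm_num
    rw [this] at hn hm ⊢
    exact Nat.xor_lt_two_pow hn hm
  · exact hn

lemma nstep_check (m c : ℕ)
    (h : ∀ ℓ ∈ lines, xor3 (m.testBit ℓ.1) (m.testBit ℓ.2.1) (m.testBit ℓ.2.2.1) = false)
    (n : ℕ) : check (nstep m c n) = check n := by
  rw [nstep]
  by_cases hb : n.testBit c
  · rw [if_pos hb]; exact check_xor n m h
  · rw [if_neg hb]

lemma check_all : ∀ n, n < 32768 → check n = true := by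
  intro n hn
  set n1 := nstep 19275 14 n with hn1
  set n2 := nstep 10965 13 n1 with hn2
  set n3 := nstep 6630 12 n2 with hn3
  set n4 := nstep 2040 10 n3 with hn4
  have e1 : check n1 = check n := nstep_check _ _ (by decide) n
  have e2 : check n2 = check n1 := nstep_check _ _ (by decide) n1
  have e3 : check n3 = check n2 := nstep_check _ _ (by decide) n2
  have e4 : check n4 = check n3 := nstep_check _ _ (by decide) n3
  have b14 : n4.testBit 14 = false := by
    rw [hn4, hn3, hn2]
    rw [nstep_keep _ _ _ (by decide), nstep_keep _ _ _ (by decide),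
      nstep_keep _ _ _ (by decide)]
    exact nstep_bit _ _ (by decide) n
  have b13 : n4.testBit 13 = false := by
    rw [hn4, hn3]
    rw [nstep_keep _ _ _ (by decide), nstep_keep _ _ _ (by decide)]
    exact nstep_bit _ _ (by decide) n1
  have b12 : n4.testBit 12 = false := by
    rw [hn4, nstep_keep _ _ _ (by decide)]
    exact nstep_bit _ _ (by decide) n2
  have b10 : n4.testBit 10 = false := nstep_bit _ _ (by decide) n3
  have hlt : n4 < 32768 :=
    nstep_lt _ _ (by norm_num) (nstep_lt _ _ (by norm_num)
      (nstep_lt _ _ (by norm_num) (nstep_lt _ _ (by norm_num) hn)))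
  have hlt4 : n4 < 4096 := by
    rw [Nat.testBit_eq_decide_div_mod_eq, decide_eq_false_iff_not] at b14 b13 b12
    norm_num at b14 b13 b12
    omega
  have hc4 : check' n4 = true := by
    have := chk_spec 12 0 chk_all n4 (by norm_num; omega)
    simpa using this
  rw [check', b10, Bool.false_or] at hc4
  rw [← e1, ← e2, ← e3, ← e4]
  exact hc4

def N (b : ℕ → Bool) : ℕ :=
  (cond (b 0) 1 0) + 2 * (cond (b 1) 1 0) + 4 * (cond (b 2) 1 0) + 8 * (cond (b 3) 1 0) +
  16 * (cond (b 4) 1 0) + 32 * (cond (b 5) 1 0) + 64 * (cond (b 6) 1 0) +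
  128 * (cond (b 7) 1 0) + 256 * (cond (b 8) 1 0) + 512 * (cond (b 9) 1 0) +
  1024 * (cond (b 10) 1 0) + 2048 * (cond (b 11) 1 0) + 4096 * (cond (b 12) 1 0) +
  8192 * (cond (b 13) 1 0) + 16384 * (cond (b 14) 1 0)

lemma cond_le (b : Bool) : (cond b 1 0 : ℕ) ≤ 1 := by cases b <;> simp

lemma N_lt (b : ℕ → Bool) : N b < 32768 := by
  have h0 := cond_le (b 0); have h1 := cond_le (b 1); have h2 := cond_le (b 2)
  have h3 := cond_le (b 3); have h4 := cond_le (b 4); have h5 := cond_le (b 5)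
  have h6 := cond_le (b 6); have h7 := cond_le (b 7); have h8 := cond_le (b 8)
  have h9 := cond_le (b 9); have h10 := cond_le (b 10); have h11 := cond_le (b 11)
  have h12 := cond_le (b 12); have h13 := cond_le (b 13); have h14 := cond_le (b 14)
  rw [N]; omega

lemma testN (b : ℕ → Bool) : ∀ i, i < 15 → (N b).testBit i = b i := by
  have h0 := cond_le (b 0)
  have h1 := cond_le (b 1)
  have h2 := cond_le (b 2)
  have h3 := cond_le (b 3)
  have h4 := cond_le (b 4)
  have h5 := cond_le (b 5)
  have h6 := cond_le (b 6)
  have h7 := cond_le (b 7)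
  have h8 := cond_le (b 8)
  have h9 := cond_le (b 9)
  have h10 := cond_le (b 10)
  have h11 := cond_le (b 11)
  have h12 := cond_le (b 12)
  have h13 := cond_le (b 13)
  have h14 := cond_le (b 14)
  have g0 : ((bif b 0 then 1 else 0 : ℕ) = 1) ↔ b 0 = true := by cases b 0 <;> simp
  have g1 : ((bif b 1 then 1 else 0 : ℕ) = 1) ↔ b 1 = true := by cases b 1 <;> simp
  have g2 : ((bif b 2 then 1 else 0 : ℕ) = 1) ↔ b 2 = true := by cases b 2 <;> simp
  have g3 : ((bif b 3 then 1 else 0 : ℕ) = 1) ↔ b 3 = true := by cases b 3 <;> simp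
  have g4 : ((bif b 4 then 1 else 0 : ℕ) = 1) ↔ b 4 = true := by cases b 4 <;> simp
  have g5 : ((bif b 5 then 1 else 0 : ℕ) = 1) ↔ b 5 = true := by cases b 5 <;> simp
  have g6 : ((bif b 6 then 1 else 0 : ℕ) = 1) ↔ b 6 = true := by cases b 6 <;> simp
  have g7 : ((bif b 7 then 1 else 0 : ℕ) = 1) ↔ b 7 = true := by cases b 7 <;> simp
  have g8 : ((bif b 8 then 1 else 0 : ℕ) = 1) ↔ b 8 = true := by cases b 8 <;> simp
  have g9 : ((bif b 9 then 1 else 0 : ℕ) = 1) ↔ b 9 = true := by cases b 9 <;> simp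
  have g10 : ((bif b 10 then 1 else 0 : ℕ) = 1) ↔ b 10 = true := by cases b 10 <;> simp
  have g11 : ((bif b 11 then 1 else 0 : ℕ) = 1) ↔ b 11 = true := by cases b 11 <;> simp
  have g12 : ((bif b 12 then 1 else 0 : ℕ) = 1) ↔ b 12 = true := by cases b 12 <;> simp
  have g13 : ((bif b 13 then 1 else 0 : ℕ) = 1) ↔ b 13 = true := by cases b 13 <;> simp
  have g14 : ((bif b 14 then 1 else 0 : ℕ) = 1) ↔ b 14 = true := by cases b 14 <;> simp
  intro i hi
  interval_cases i <;>
  · rw [Nat.testBit_eq_decide_div_mod_eq, Bool.eq_iff_iff]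
    simp only [decide_eq_true_eq, N]
    simp only [← g0, ← g1, ← g2, ← g3, ← g4, ← g5, ← g6, ← g7, ← g8, ← g9, ← g10, ← g11,
      ← g12, ← g13, ← g14]
    norm_num
    omega

lemma cnt_ge (b : ℕ → Bool) : 3 ≤ cnt b := by
  have he : cnt b = cnt (N b).testBit := by
    rw [cnt, cnt]
    refine (List.countP_congr ?_).symm
    intro ℓ hl
    fin_cases hl <;> simp only [violB] <;>
      rw [testN _ _ (by norm_num), testN _ _ (by norm_num), testN _ _ (by norm_num)]
  rw [he]
  have := check_all (N b) (N_lt b)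
  rw [check] at this
  exact Nat.le_of_ble_eq_true this


def pt (n : ℕ) : Idx := (⟨(n+1)/4 % 4, by omega⟩, ⟨(n+1) % 4, by omega⟩)

noncomputable def Lset (ℓ : ℕ × ℕ × ℕ × Bool) : Set (Matrix (Fin 2 × Fin 2) (Fin 2 × Fin 2) ℂ) :=
  {Pmat (pt ℓ.1), Pmat (pt ℓ.2.1), Pmat (pt ℓ.2.2.1)}

lemma line_facts : ∀ ℓ ∈ lines,
    pt ℓ.1 ≠ (0,0) ∧ pt ℓ.2.1 ≠ (0,0) ∧ pt ℓ.2.2.1 ≠ (0,0) ∧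
    pt ℓ.1 ≠ pt ℓ.2.1 ∧ pt ℓ.1 ≠ pt ℓ.2.2.1 ∧ pt ℓ.2.1 ≠ pt ℓ.2.2.1 ∧
    pt ℓ.2.2.1 = xx (pt ℓ.1) (pt ℓ.2.1) ∧
    E (pt ℓ.1) (pt ℓ.2.1) % 4 = cond ℓ.2.2.2 2 0 ∧
    E (pt ℓ.1) (pt ℓ.2.1) % 4 = E (pt ℓ.2.1) (pt ℓ.1) % 4 ∧
    E (pt ℓ.1) (pt ℓ.2.2.1) % 4 = E (pt ℓ.2.2.1) (pt ℓ.1) % 4 ∧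
    E (pt ℓ.2.1) (pt ℓ.2.2.1) % 4 = E (pt ℓ.2.2.1) (pt ℓ.2.1) % 4 := by decide

lemma Ipow_sign (n : ℕ) (s : Bool) (h : n % 4 = cond s 2 0) :
    Complex.I ^ n = ((cond s (-1) 1 : ℤ) : ℂ) := by
  rw [Ipow_mod, h]; cases s <;> norm_num [pow_succ]

lemma line_isLine : ∀ ℓ ∈ lines, IsPauliLine (Lset ℓ) := by
  intro ℓ hl
  obtain ⟨h1, h2, h3, d1, d2, d3, hxxk, hsgn, c1, c2, c3⟩ := line_facts ℓ hl
  refine ⟨Pmat (pt ℓ.1), Pmat (pt ℓ.2.1), Pmat (pt ℓ.2.2.1),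
    (mem_pauliStrings _).mpr ⟨_, h1, rfl⟩, (mem_pauliStrings _).mpr ⟨_, h2, rfl⟩,
    (mem_pauliStrings _).mpr ⟨_, h3, rfl⟩,
    fun h => d1 (Pmat_inj h), fun h => d2 (Pmat_inj h), fun h => d3 (Pmat_inj h),
    rfl, commP _ _ c1, commP _ _ c2, commP _ _ c3,
    ((cond ℓ.2.2.2 (-1) 1 : ℤ) : ℂ), ?_, ?_⟩
  · cases ℓ.2.2.2 <;> norm_num
  · rw [hxxk, tripleP, Ipow_sign _ _ hsgn]

lemma sign_bridge (x y z : ℤ) (hx : x = 1 ∨ x = -1) (hy : y = 1 ∨ y = -1)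
    (hz : z = 1 ∨ z = -1) (s : Bool)
    (h : (xor3 (decide (x = -1)) (decide (y = -1)) (decide (z = -1)) != s) = true) :
    x * y * z ≠ cond s (-1) 1 := by
  rcases hx with rfl | rfl <;> rcases hy with rfl | rfl <;> rcases hz with rfl | rfl <;>
    cases s <;> simp_all [xor3] <;> decide

lemma line_violates (ν : Matrix (Fin 2 × Fin 2) (Fin 2 × Fin 2) ℂ → ℤ)
    (hν : ∀ P ∈ pauliStrings, ν P = 1 ∨ ν P = -1)
    (ℓ : ℕ × ℕ × ℕ × Bool) (hl : ℓ ∈ lines)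
    (hv : violB (fun m => decide (ν (Pmat (pt m)) = -1)) ℓ = true) :
    Violates ν (Lset ℓ) := by
  obtain ⟨h1, h2, h3, d1, d2, d3, hxxk, hsgn, c1, c2, c3⟩ := line_facts ℓ hl
  refine ⟨Pmat (pt ℓ.1), Pmat (pt ℓ.2.1), Pmat (pt ℓ.2.2.1), (cond ℓ.2.2.2 (-1) 1 : ℤ),
    rfl, fun h => d1 (Pmat_inj h), fun h => d2 (Pmat_inj h), fun h => d3 (Pmat_inj h), ?_, ?_⟩
  · rw [hxxk, tripleP, Ipow_sign _ _ hsgn]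
  · exact sign_bridge _ _ _
      (hν _ ((mem_pauliStrings _).mpr ⟨_, h1, rfl⟩))
      (hν _ ((mem_pauliStrings _).mpr ⟨_, h2, rfl⟩))
      (hν _ ((mem_pauliStrings _).mpr ⟨_, h3, rfl⟩)) _ hv

def tfin (ℓ : ℕ × ℕ × ℕ × Bool) : Finset Idx := {pt ℓ.1, pt ℓ.2.1, pt ℓ.2.2.1}

lemma tfin_ne : ∀ ℓ ∈ lines, ∀ ℓ' ∈ lines, ℓ ≠ ℓ' → tfin ℓ ≠ tfin ℓ' := by decide

lemma lines_nodup : lines.Nodup := by decide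

lemma Lset_eq_image (ℓ : ℕ × ℕ × ℕ × Bool) : Lset ℓ = Pmat '' (tfin ℓ : Set Idx) := by
  simp [Lset, tfin, Set.image_insert_eq]

lemma Lset_ne {ℓ ℓ' : ℕ × ℕ × ℕ × Bool} (hl : ℓ ∈ lines) (hl' : ℓ' ∈ lines) (h : ℓ ≠ ℓ') :
    Lset ℓ ≠ Lset ℓ' := by
  intro he
  rw [Lset_eq_image, Lset_eq_image] at he
  exact tfin_ne ℓ hl ℓ' hl' h (Finset.coe_inj.mp (Set.image_injective.mpr Pmat_inj he))

lemma pauliStrings_finite : pauliStrings.Finite := by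
  refine Set.Finite.subset (Set.finite_range Pmat) ?_
  rintro A hA
  obtain ⟨u, _, rfl⟩ := (mem_pauliStrings A).mp hA
  exact ⟨u, rfl⟩

lemma violSet_finite (ν : Matrix (Fin 2 × Fin 2) (Fin 2 × Fin 2) ℂ → ℤ) :
    {L | IsPauliLine L ∧ Violates ν L}.Finite := by
  refine Set.Finite.subset pauliStrings_finite.finite_subsets ?_
  rintro L ⟨⟨P, Q, R, hP, hQ, hR, _, _, _, rfl, _⟩, _⟩
  rintro x (rfl | rfl | rfl) <;> assumption

lemma prod_perm {P Q R P' Q' R' : Matrix (Fin 2 × Fin 2) (Fin 2 × Fin 2) ℂ}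
    (hPQ : P * Q = Q * P) (hPR : P * R = R * P) (hQR : Q * R = R * Q)
    (hset : ({P', Q', R'} : Set (Matrix (Fin 2 × Fin 2) (Fin 2 × Fin 2) ℂ)) = {P, Q, R})
    (d1 : P' ≠ Q') (d2 : P' ≠ R') (d3 : Q' ≠ R') :
    P' * Q' * R' = P * Q * R := by
  have e1 : Q * P * R = P * Q * R := by rw [hPQ]
  have e2 : P * R * Q = P * Q * R := by rw [mul_assoc, ← hQR, ← mul_assoc]
  have e3 : R * P * Q = P * Q * R := by rw [← hPR, e2]
  have e4 : Q * R * P = P * Q * R := by rw [mul_assoc, ← hPR, ← mul_assoc, ← hPQ]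
  have e5 : R * Q * P = P * Q * R := by rw [mul_assoc, ← hPQ, ← mul_assoc, ← hPR]; exact e2
  have hP' : P' = P ∨ P' = Q ∨ P' = R := by
    have : P' ∈ ({P, Q, R} : Set _) := hset ▸ (by simp : P' ∈ ({P', Q', R'} : Set _))
    simpa using this
  have hQ' : Q' = P ∨ Q' = Q ∨ Q' = R := by
    have : Q' ∈ ({P, Q, R} : Set _) := hset ▸ (by simp : Q' ∈ ({P', Q', R'} : Set _))
    simpa using this
  have hR' : R' = P ∨ R' = Q ∨ R' = R := by
    have : R' ∈ ({P, Q, R} : Set _) := hset ▸ (by simp : R' ∈ ({P', Q', R'} : Set _))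
    simpa using this
  rcases hP' with rfl | rfl | rfl <;> rcases hQ' with rfl | rfl | rfl <;>
    rcases hR' with rfl | rfl | rfl <;>
    first
      | rfl | exact e1 | exact e2 | exact e3 | exact e4 | exact e5
      | exact absurd rfl d1 | exact absurd rfl d2 | exact absurd rfl d3

lemma classify : ∀ u v : Idx, u ≠ (0,0) → v ≠ (0,0) → u ≠ v → E u v % 4 = 2 →
    ({u, v, xx u v} : Finset Idx) = {(1,1), (2,2), (3,3)} ∨
    ({u, v, xx u v} : Finset Idx) = {(1,2), (2,3), (3,1)} ∨
    ({u, v, xx u v} : Finset Idx) = {(1,3), (2,1), (3,2)} := by decide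

lemma Pmat_xx : Pmat ((1 : Fin 4), (1 : Fin 4)) = σx ⊗ₖ σx := rfl
lemma Ipow_neg_of (a b : ℕ) : True := trivial


/-- Every `±1` assignment to the two-qubit Pauli strings violates at least 3 of the 15
Pauli lines; the all-ones assignment violates exactly the 3 lines
`{X⊗X, Y⊗Y, Z⊗Z}`, `{X⊗Y, Y⊗Z, Z⊗X}`, `{X⊗Z, Y⊗X, Z⊗Y}`. -/
theorem stmt_14 :
    (∀ ν : Matrix (Fin 2 × Fin 2) (Fin 2 × Fin 2) ℂ → ℤ,
      (∀ P ∈ pauliStrings, ν P = 1 ∨ ν P = -1) →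
      3 ≤ {L | IsPauliLine L ∧ Violates ν L}.ncard) ∧
    {L | IsPauliLine L ∧ Violates (fun _ => 1) L} =
      {({σx ⊗ₖ σx, σy ⊗ₖ σy, σz ⊗ₖ σz} : Set (Matrix (Fin 2 × Fin 2) (Fin 2 × Fin 2) ℂ)),
       {σx ⊗ₖ σy, σy ⊗ₖ σz, σz ⊗ₖ σx},
       {σx ⊗ₖ σz, σy ⊗ₖ σx, σz ⊗ₖ σy}} := by
  constructor
  · -- part 1
    intro ν hν
    set b : ℕ → Bool := fun m => decide (ν (Pmat (pt m)) = -1) with hb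
    have h3 : 3 ≤ (lines.filter (violB b)).length := by
      rw [← List.countP_eq_length_filter]; exact cnt_ge b
    have hnd : (lines.filter (violB b)).Nodup := lines_nodup.filter _
    have hsubl : ∀ x ∈ lines.filter (violB b), x ∈ lines ∧ violB b x = true := by
      intro x hx; exact ⟨(List.mem_filter.mp hx).1, (List.mem_filter.mp hx).2⟩
    rcases hf : lines.filter (violB b) with _ | ⟨l1, _ | ⟨l2, _ | ⟨l3, rest⟩⟩⟩ <;>
      rw [hf] at h3 <;> simp at h3
    rw [hf] at hnd hsubl
    simp only [List.nodup_cons, List.mem_cons] at hnd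
    have n12 : l1 ≠ l2 := fun h => hnd.1 (Or.inl h)
    have n13 : l1 ≠ l3 := fun h => hnd.1 (Or.inr (Or.inl h))
    have n23 : l2 ≠ l3 := fun h => hnd.2.1 (Or.inl h)
    have m1 := hsubl l1 (by simp)
    have m2 := hsubl l2 (by simp)
    have m3 := hsubl l3 (by simp)
    have hmem : ({Lset l1, Lset l2, Lset l3} : Set (Set (Matrix (Fin 2 × Fin 2) (Fin 2 × Fin 2) ℂ)))
        ⊆ {L | IsPauliLine L ∧ Violates ν L} := by
      rintro x (rfl | rfl | rfl)
      exacts [⟨line_isLine _ m1.1, line_violates ν hν _ m1.1 m1.2⟩,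
        ⟨line_isLine _ m2.1, line_violates ν hν _ m2.1 m2.2⟩,
        ⟨line_isLine _ m3.1, line_violates ν hν _ m3.1 m3.2⟩]
    have hcard : ({Lset l1, Lset l2, Lset l3} : Set (Set (Matrix (Fin 2 × Fin 2) (Fin 2 × Fin 2) ℂ))).ncard = 3 := by
      rw [Set.ncard_insert_of_notMem 
        (by simp [Lset_ne m1.1 m2.1 n12, Lset_ne m1.1 m3.1 n13]) (Set.toFinite _),
        Set.ncard_pair (Lset_ne m2.1 m3.1 n23)]
    calc (3 : ℕ) = _ := hcard.symm
      _ ≤ _ := Set.ncard_le_ncard hmem (violSet_finite ν)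
  · -- part 2
    ext L
    simp only [Set.mem_setOf_eq, Set.mem_insert_iff, Set.mem_singleton_iff]
    constructor
    · rintro ⟨⟨P, Q, R, hP, hQ, hR, dPQ, dPR, dQR, rfl, cPQ, cPR, cQR, ε, hε, hprod⟩,
        P', Q', R', ε', hL', dPQ', dPR', dQR', hprod', hne'⟩
      obtain ⟨u, hu0, rfl⟩ := (mem_pauliStrings P).mp hP
      obtain ⟨v, hv0, rfl⟩ := (mem_pauliStrings Q).mp hQ
      obtain ⟨w, hw0, rfl⟩ := (mem_pauliStrings R).mp hR
      -- ε' = ε, so ε = -1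
      have hpp : P' * Q' * R' = Pmat u * Pmat v * Pmat w :=
        prod_perm cPQ cPR cQR hL'.symm dPQ' dPR' dQR'
      have hεε : (ε' : ℂ) = ε := smul_one_inj (by rw [← hprod, ← hprod', hpp])
      have hε1 : ¬ (1 : ℤ) = ε' := by simpa using hne'
      have hεneg : ε = -1 := by
        rcases hε with rfl | rfl
        · exact absurd (by exact_mod_cast hεε : ε' = (1:ℤ)).symm hε1
        · rfl
      subst hεneg
      -- scalar structure forces w = xx u v
      have hexp : Pmat u * Pmat v * Pmat w
          = (Complex.I ^ E u v * Complex.I ^ E (xx u v) w) • Pmat (xx (xx u v) w) := by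
        rw [mulP, Matrix.smul_mul, mulP, smul_smul]
      have hw : xx u v = w := by
        by_contra hne
        have h0 : xx (xx u v) w ≠ (0,0) := fun hc => hne ((xx_eq_zero_iff _ _).mp hc)
        have := congrArg Matrix.trace (hexp.symm.trans hprod)
        rw [Matrix.trace_smul, Matrix.trace_smul, traceP, if_neg h0, Matrix.trace_one] at this
        simp at this
      have hE : Complex.I ^ E u v = -1 := by
        rw [hexp, ← hw, E_self, xx_self, Pmat_zero, pow_zero, mul_one] at hprod
        exact smul_one_inj hprod
      have hE2 : E u v % 4 = 2 := (Ipow_eq_neg_one_iff _).mp hE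
      have huv : u ≠ v := fun h => dPQ (congrArg Pmat h)
      have hLim : ({Pmat u, Pmat v, Pmat w} : Set (Matrix (Fin 2 × Fin 2) (Fin 2 × Fin 2) ℂ))
          = Pmat '' (({u, v, xx u v} : Finset Idx) : Set Idx) := by
        rw [hw]; simp [Set.image_insert_eq]
      rcases classify u v hu0 hv0 huv hE2 with hc | hc | hc <;> rw [hLim, hc]
      · left
        simp only [Finset.coe_insert, Finset.coe_singleton, Set.image_insert_eq,
          Set.image_singleton]
        rfl
      · right; left
        simp only [Finset.coe_insert, Finset.coe_singleton, Set.image_insert_eq,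
          Set.image_singleton]
        rfl
      · right; right
        simp only [Finset.coe_insert, Finset.coe_singleton, Set.image_insert_eq,
          Set.image_singleton]
        rfl
    · have hL1 : ({σx ⊗ₖ σx, σy ⊗ₖ σy, σz ⊗ₖ σz} : Set (Matrix (Fin 2 × Fin 2) (Fin 2 × Fin 2) ℂ))
          = Lset (4, 9, 14, true) := rfl
      have hL2 : ({σx ⊗ₖ σy, σy ⊗ₖ σz, σz ⊗ₖ σx} : Set (Matrix (Fin 2 × Fin 2) (Fin 2 × Fin 2) ℂ))
          = Lset (5, 10, 12, true) := rfl
      have hL3 : ({σx ⊗ₖ σz, σy ⊗ₖ σx, σz ⊗ₖ σy} : Set (Matrix (Fin 2 × Fin 2) (Fin 2 × Fin 2) ℂ))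
          = Lset (6, 8, 13, true) := rfl
      have hv : ∀ ℓ ∈ lines, ℓ.2.2.2 = true →
          Violates (fun _ => 1) (Lset ℓ) := by
        intro ℓ hl hs
        have := line_violates (fun _ => 1) (fun _ _ => Or.inl rfl) ℓ hl ?_
        · exact this
        · simp [violB, xor3, hs]
      rintro (rfl | rfl | rfl)
      · rw [hL1]
        exact ⟨line_isLine _ (by decide), hv _ (by decide) rfl⟩
      · rw [hL2]
        exact ⟨line_isLine _ (by decide), hv _ (by decide) rfl⟩
      · rw [hL3]
        exact ⟨line_isLine _ (by decide), hv _ (by decide) rfl⟩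


end Stmt14
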